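/- For natural numbers a, b, c: if the Grundy value of two-pile Nim with a pass (a,b)* equals c, then three-pile Nim with a pass (a,b,c)* is a P-position. -/

import Mathlib

/-- Finite impartial games, given by their (finite list of) options. -/
inductive IGame : Type where
  | mk : List IGame → IGame

/-- The empty game `E`, with no options. -/
abbrev E : IGame := .mk []

/-- The list of options of a game. -/
def IGame.opts : IGame → List IGame
  | .mk l => l

theorem IGame.sizeOf_lt_of_mem {g : IGame} {l : List IGame} (h : g ∈ l) :
    sizeOf g < sizeOf (IGame.mk l) := by
  have := List.sizeOf_lt_of_mem h
  simp only [IGame.mk.sizeOf_spec]; omega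

/-- The pass operator: `E* = E`; for `G` with options, `G*` has options
`G` together with `g*` for each option `g` of `G`. -/
def pass : IGame → IGame
  | .mk [] => .mk []
  | .mk l => .mk (.mk l :: l.attach.map fun g => pass g.1)
decreasing_by
  exact IGame.sizeOf_lt_of_mem g.2

/-- The split sum `G ∘ H`. -/
def split : IGame → IGame → IGame
  | .mk [], _ => .mk []
  | .mk gs, .mk [] => .mk gs
  | .mk gs, .mk hs =>
      .mk ((hs.attach.map fun h => split (.mk gs) h.1) ++
           (gs.attach.map fun g => split g.1 (.mk hs)))
termination_by G H => sizeOf G + sizeOf H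
decreasing_by
  · have := IGame.sizeOf_lt_of_mem h.2; omega
  · have := IGame.sizeOf_lt_of_mem g.2; omega

/-- Disjunctive sum of games. -/
def addG : IGame → IGame → IGame
  | .mk gs, .mk hs =>
      .mk ((gs.attach.map fun g => addG g.1 (.mk hs)) ++
           (hs.attach.map fun h => addG (.mk gs) h.1))
termination_by G H => sizeOf G + sizeOf H
decreasing_by
  · have := IGame.sizeOf_lt_of_mem g.2; omega
  · have := IGame.sizeOf_lt_of_mem h.2; omega

/-- The nimber `*n`, with options `*0, …, *(n-1)`. -/
def star : ℕ → IGame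
  | n => .mk ((List.range n).attach.map fun k => star k.1)
termination_by n => n
decreasing_by have := List.mem_range.mp k.2; omega

/-- `G` is a P-position (previous player wins under normal play):
every option is an N-position. -/
def PPos : IGame → Prop
  | .mk l => ∀ g ∈ l.attach, ¬ PPos g.1
decreasing_by exact IGame.sizeOf_lt_of_mem g.2

/-- Identity of game trees (extensionally: same set of options, recursively). -/
def Ident : IGame → IGame → Prop
  | .mk gs, .mk hs =>
      (∀ g ∈ gs.attach, ∃ h ∈ hs.attach, Ident g.1 h.1) ∧
      (∀ h ∈ hs.attach, ∃ g ∈ gs.attach, Ident g.1 h.1)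
termination_by G H => sizeOf G + sizeOf H
decreasing_by
  · have := IGame.sizeOf_lt_of_mem g.2
    have := IGame.sizeOf_lt_of_mem h.2; omega
  · have := IGame.sizeOf_lt_of_mem g.2
    have := IGame.sizeOf_lt_of_mem h.2; omega


-- ### auxiliary development

noncomputable def mex (l : List ℕ) : ℕ := sInf {n | n ∉ l}

lemma mex_not_mem (l : List ℕ) : mex l ∉ l := by
  have h1 : {n : ℕ | n ∈ l}.Finite := l.finite_toSet
  exact Nat.sInf_mem h1.infinite_compl.nonempty

lemma mem_of_lt_mex {l : List ℕ} {k : ℕ} (h : k < mex l) : k ∈ l := by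
  by_contra hk
  have h2 := Nat.sInf_le (show k ∈ {n : ℕ | n ∉ l} from hk)
  unfold mex at h
  omega

lemma mex_eq {l : List ℕ} {n : ℕ} (h1 : n ∉ l) (h2 : ∀ k < n, k ∈ l) : mex l = n := by
  refine le_antisymm (Nat.sInf_le h1) ?_
  by_contra hlt
  push_neg at hlt
  exact mex_not_mem l (h2 _ hlt)

noncomputable def grundy : IGame → ℕ
  | .mk l => mex (l.attach.map fun g => grundy g.1)
decreasing_by exact IGame.sizeOf_lt_of_mem g.2

lemma grundy_mk (l : List IGame) : grundy (.mk l) = mex (l.map grundy) := by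
  rw [grundy, List.attach_map_val]

lemma PPos_mk (l : List IGame) : PPos (.mk l) ↔ ∀ g ∈ l, ¬ PPos g := by
  rw [PPos]
  constructor
  · intro h g hg
    exact h ⟨g, hg⟩ (List.mem_attach _ _)
  · intro h g _
    exact h g.1 g.2

lemma PPos_iff_grundy : ∀ G : IGame, PPos G ↔ grundy G = 0
  | .mk l => by
    rw [PPos_mk, grundy_mk]
    constructor
    · intro h
      refine mex_eq ?_ (by omega)
      intro hmem
      obtain ⟨g, hg, hg0⟩ := List.mem_map.mp hmem
      exact h g hg ((PPos_iff_grundy g).mpr hg0)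
    · intro h g hg hP
      have : (0 : ℕ) ∈ l.map grundy :=
        List.mem_map.mpr ⟨g, hg, (PPos_iff_grundy g).mp hP⟩
      rw [← h] at this
      exact mex_not_mem _ this
decreasing_by all_goals exact IGame.sizeOf_lt_of_mem hg

lemma star_eq (n : ℕ) : _root_.star n = .mk ((List.range n).map _root_.star) := by
  rw [_root_.star, List.attach_map_val]

lemma grundy_star : ∀ n : ℕ, grundy (_root_.star n) = n := by
  intro n
  induction n using Nat.strong_induction_on with
  | _ n ih =>
    rw [star_eq, grundy_mk, List.map_map]
    refine mex_eq ?_ ?_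
    · intro hmem
      obtain ⟨k, hk, he⟩ := List.mem_map.mp hmem
      rw [List.mem_range] at hk
      have : grundy (_root_.star k) = n := he
      rw [ih k hk] at this
      omega
    · intro k hk
      refine List.mem_map.mpr ⟨k, List.mem_range.mpr hk, ?_⟩
      exact ih k hk

lemma addG_mk (gs hs : List IGame) :
    addG (.mk gs) (.mk hs) =
      .mk (gs.map (fun g => addG g (.mk hs)) ++ hs.map (fun h => addG (.mk gs) h)) := by
  rw [addG, List.attach_map_val (l := gs) (f := fun g => addG g (.mk hs)),
    List.attach_map_val (l := hs) (f := fun h => addG (.mk gs) h)]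

lemma xor_cancel {x y z : ℕ} (h : x ^^^ y = z ^^^ y) : x = z := by
  have : x ^^^ y ^^^ y = z ^^^ y ^^^ y := by rw [h]
  simpa [Nat.xor_assoc] using this

theorem grundy_addG : ∀ G H : IGame, grundy (addG G H) = grundy G ^^^ grundy H
  | .mk gs, .mk hs => by
    rw [addG_mk, grundy_mk, List.map_append, List.map_map, List.map_map]
    refine mex_eq ?_ ?_
    · intro hmem
      rcases List.mem_append.mp hmem with hm | hm
      · obtain ⟨g, hg, he⟩ := List.mem_map.mp hm
        have he' : grundy (addG g (.mk hs)) = grundy (.mk gs) ^^^ grundy (.mk hs) := he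
        rw [grundy_addG g (.mk hs)] at he'
        have : grundy g = grundy (IGame.mk gs) := xor_cancel he'
        rw [grundy_mk gs] at this
        have hmem2 : grundy g ∈ List.map grundy gs := List.mem_map.mpr ⟨g, hg, rfl⟩
        rw [this] at hmem2
        exact mex_not_mem _ hmem2
      · obtain ⟨h, hh, he⟩ := List.mem_map.mp hm
        have he' : grundy (addG (.mk gs) h) = grundy (.mk gs) ^^^ grundy (.mk hs) := he
        rw [grundy_addG (.mk gs) h, Nat.xor_comm (grundy (IGame.mk gs)) (grundy h),
          Nat.xor_comm (grundy (IGame.mk gs)) (grundy (IGame.mk hs))] at he'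
        have : grundy h = grundy (IGame.mk hs) := xor_cancel he'
        rw [grundy_mk hs] at this
        have hmem2 : grundy h ∈ List.map grundy hs := List.mem_map.mpr ⟨h, hh, rfl⟩
        rw [this] at hmem2
        exact mex_not_mem _ hmem2
    · intro k hk
      rcases Nat.lt_xor_cases hk with hc | hc
      · rw [grundy_mk gs] at hc
        obtain ⟨g, hg, hge⟩ := List.mem_map.mp (mem_of_lt_mex hc)
        refine List.mem_append.mpr (Or.inl (List.mem_map.mpr ⟨g, hg, ?_⟩))
        show grundy (addG g (.mk hs)) = k
        rw [grundy_addG g (.mk hs), hge, Nat.xor_assoc, Nat.xor_self, Nat.xor_zero]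
      · rw [grundy_mk hs] at hc
        obtain ⟨h, hh, hhe⟩ := List.mem_map.mp (mem_of_lt_mex hc)
        refine List.mem_append.mpr (Or.inr (List.mem_map.mpr ⟨h, hh, ?_⟩))
        show grundy (addG (.mk gs) h) = k
        rw [grundy_addG (.mk gs) h, hhe, Nat.xor_comm k, ← Nat.xor_assoc,
          Nat.xor_self, Nat.zero_xor]
termination_by G H => sizeOf G + sizeOf H
decreasing_by
  all_goals first
    | (have := IGame.sizeOf_lt_of_mem hg; omega)
    | (have := IGame.sizeOf_lt_of_mem hh; omega)

lemma mex_nil : mex [] = 0 := mex_eq (List.not_mem_nil (a := 0)) (by omega)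

lemma pass_nil : _root_.pass (.mk []) = .mk [] := pass.eq_1

lemma pass_mk {l : List IGame} (h : l ≠ []) :
    _root_.pass (.mk l) = .mk (.mk l :: l.map _root_.pass) := by
  rw [pass.eq_2 l (fun he => h he), List.attach_map_val (l := l) (f := pass)]

lemma addG_star (gs : List IGame) (n : ℕ) :
    addG (.mk gs) (_root_.star n) =
      .mk (gs.map (fun g => addG g (_root_.star n)) ++
           (List.range n).map (fun k => addG (.mk gs) (_root_.star k))) := by
  conv_lhs => rw [star_eq n]
  rw [addG_mk, List.map_map, ← star_eq n]
  rfl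

lemma pass_N_of_opt_P {l : List IGame} {s : IGame} (hl : l ≠ [])
    (hs : s ∈ (IGame.mk l :: l.map _root_.pass)) (hP : PPos s) :
    ¬ PPos (_root_.pass (.mk l)) := by
  rw [pass_mk hl, PPos_mk]
  intro h
  exact h s hs hP

lemma PPos_addG_star {G : IGame} {n : ℕ} (h : grundy G = n) :
    PPos (addG G (_root_.star n)) := by
  rw [PPos_iff_grundy, grundy_addG, grundy_star, h, Nat.xor_self]

theorem main : ∀ (G : IGame) (n : ℕ), grundy (_root_.pass G) = n →
    PPos (_root_.pass (addG G (_root_.star n)))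
  | .mk gs, n, h => by
    rcases eq_or_ne gs [] with rfl | hgs
    · rw [pass_nil, grundy_mk, List.map_nil, mex_nil] at h
      subst h
      rw [star_eq 0, List.range_zero, List.map_nil, addG_mk, List.map_nil, List.map_nil,
        List.append_nil, pass_nil, PPos_mk]
      simp
    · -- analyze h
      rw [pass_mk hgs, grundy_mk, List.map_cons, List.map_map] at h
      -- h : mex (grundy (mk gs) :: gs.map (grundy ∘ pass)) = n
      have h0 := mex_not_mem (grundy (IGame.mk gs) :: gs.map (grundy ∘ _root_.pass))
      rw [h] at h0
      have hGne : grundy (.mk gs) ≠ n := by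
        intro he
        exact h0 (by rw [← he]; exact List.mem_cons_self)
      have hgne : ∀ g ∈ gs, grundy (_root_.pass g) ≠ n := by
        intro g hg he
        exact h0 (List.mem_cons_of_mem _ (List.mem_map.mpr ⟨g, hg, he⟩))
      have hlt : ∀ k < n, grundy (.mk gs) = k ∨ ∃ g ∈ gs, grundy (_root_.pass g) = k := by
        intro k hk
        have := mem_of_lt_mex (show k < mex _ by rw [h]; exact hk)
        rcases List.mem_cons.mp this with he | hm
        · exact Or.inl he.symm
        · obtain ⟨g, hg, he⟩ := List.mem_map.mp hm
          exact Or.inr ⟨g, hg, he⟩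
      -- set up the sum game
      have hne : gs.map (fun g => addG g (_root_.star n)) ++
          (List.range n).map (fun k => addG (.mk gs) (_root_.star k)) ≠ [] := by
        intro he
        rcases List.append_eq_nil_iff.mp he with ⟨h1, _⟩
        exact hgs (List.map_eq_nil_iff.mp h1)
      rw [addG_star, pass_mk hne, PPos_mk]
      intro s hs
      rcases List.mem_cons.mp hs with rfl | hs
      · -- the pass move: the sum itself, which is an N-position
        rw [PPos_iff_grundy, ← addG_star, grundy_addG, grundy_star]
        intro he
        exact hGne (xor_eq_zero_iff.mp he)
      · obtain ⟨t, ht, rfl⟩ := List.mem_map.mp hs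
        rcases List.mem_append.mp ht with ht | ht
        · -- move in G: t = addG g (star n)
          obtain ⟨g, hg, rfl⟩ := List.mem_map.mp ht
          obtain ⟨gl⟩ := g
          have hm := hgne _ hg
          rcases Nat.lt_or_ge (grundy (pass (.mk gl))) n with hmn | hmn
          · -- grundy (pass g) = m < n : respond in the star pile
            have hIH := main (.mk gl) _ rfl
            rw [addG_star]
            refine pass_N_of_opt_P ?_ ?_ hIH
            · intro he
              rcases List.append_eq_nil_iff.mp he with ⟨_, h2⟩
              have hn0 : n = 0 := by
                by_contra h0
                exact absurd (List.map_eq_nil_iff.mp h2) (List.range_eq_nil.not.mpr h0)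
              omega
            · refine List.mem_cons_of_mem _ (List.mem_map.mpr ⟨_, ?_, rfl⟩)
              exact List.mem_append.mpr (Or.inr (List.mem_map.mpr
                ⟨grundy (_root_.pass (.mk gl)), List.mem_range.mpr hmn, rfl⟩))
          · -- grundy (pass g) = m > n
            have hmn' : n < grundy (pass (.mk gl)) := lt_of_le_of_ne hmn (fun he => hm he.symm)
            rcases eq_or_ne gl [] with rfl | hgl
            · rw [pass_nil, grundy_mk, List.map_nil, mex_nil] at hmn'
              omega
            · rw [pass_mk hgl, grundy_mk, List.map_cons, List.map_map] at hmn'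
              have := mem_of_lt_mex hmn'
              rcases List.mem_cons.mp this with he | hm2
              · -- grundy g = n: use the pass move in (g + *n)*
                have hP : PPos (addG (.mk gl) (_root_.star n)) := PPos_addG_star he.symm
                rw [addG_star] at hP ⊢
                refine pass_N_of_opt_P ?_ (List.mem_cons_self) hP
                intro he2
                rcases List.append_eq_nil_iff.mp he2 with ⟨h1, _⟩
                exact hgl (List.map_eq_nil_iff.mp h1)
              · -- some g' ∈ gl with grundy (pass g') = n
                obtain ⟨g', hg', he'⟩ := List.mem_map.mp hm2
                have hIH := main g' n he'
                rw [addG_star]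
                refine pass_N_of_opt_P ?_ ?_ hIH
                · intro he2
                  rcases List.append_eq_nil_iff.mp he2 with ⟨h1, _⟩
                  exact hgl (List.map_eq_nil_iff.mp h1)
                · refine List.mem_cons_of_mem _ (List.mem_map.mpr ⟨_, ?_, rfl⟩)
                  exact List.mem_append.mpr (Or.inl (List.mem_map.mpr ⟨g', hg', rfl⟩))
        · -- move in the star pile: t = addG (mk gs) (star k), k < n
          obtain ⟨k, hk, rfl⟩ := List.mem_map.mp ht
          rw [List.mem_range] at hk
          rcases hlt k hk with he | ⟨g, hg, he⟩
          · have hP : PPos (addG (.mk gs) (_root_.star k)) := PPos_addG_star he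
            rw [addG_star] at hP ⊢
            refine pass_N_of_opt_P ?_ (List.mem_cons_self) hP
            intro he2
            rcases List.append_eq_nil_iff.mp he2 with ⟨h1, _⟩
            exact hgs (List.map_eq_nil_iff.mp h1)
          · have hIH := main g k he
            rw [addG_star]
            refine pass_N_of_opt_P ?_ ?_ hIH
            · intro he2
              rcases List.append_eq_nil_iff.mp he2 with ⟨h1, _⟩
              exact hgs (List.map_eq_nil_iff.mp h1)
            · refine List.mem_cons_of_mem _ (List.mem_map.mpr ⟨_, ?_, rfl⟩)
              exact List.mem_append.mpr (Or.inl (List.mem_map.mpr ⟨g, hg, rfl⟩))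
termination_by G n => sizeOf G
decreasing_by
  · exact IGame.sizeOf_lt_of_mem hg
  · have h1 := IGame.sizeOf_lt_of_mem hg'
    have h2 := IGame.sizeOf_lt_of_mem hg
    omega
  · exact IGame.sizeOf_lt_of_mem hg

/-- if the Grundy value of `(a,b)*` is `c` (i.e.
`(a,b)* + *c` is a P-position), then `(a,b,c)*` is a P-position. -/
theorem three_pile_from_two_pile (a b c : ℕ)
    (h : PPos (addG (pass (addG (star a) (star b))) (star c))) :
    PPos (pass (addG (addG (star a) (star b)) (star c))) := by
  rw [PPos_iff_grundy, grundy_addG, grundy_star] at h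
  exact main _ c (xor_eq_zero_iff.mp h)
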